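/- Let U₁, U₂ ∈ V, T₁, T₂ ∈ Z and let E be a linear functional on Z such that a_Z(T₁,z) + c₃(U₁,T₁,z) = f₃(z) + E(z) for all z ∈ Z, while a_Z(T₂,z) + c₃(U₂,T₂,z) = f₃(z) for all z ∈ Z. Then ‖T₁ − T₂‖_Z ≤ Pr·Re·‖E‖ + M₃·(Pr·Re)²·‖f₃‖·‖U₁ − U₂‖_V, where ‖E‖ := sup{E(z)/‖z‖_Z : z ≠ 0}. (Abstract version of the temperature error estimate (5.8b) in the proof of Theorem 5.1.) -/

import Mathlib

/-- Abstract version of the temperature error estimate (5.8b) in the proof of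
Theorem 5.1: if `T₁` solves the perturbed temperature equation (with
consistency error functional `E`) for velocity `U₁` and `T₂` solves the exact
one for velocity `U₂`, then
`‖T₁ − T₂‖ ≤ Pr·Re·‖E‖ + M₃·(Pr·Re)²·‖f₃‖·‖U₁ − U₂‖`. -/
theorem temperature_error_estimate
    {V Z : Type*}
    [NormedAddCommGroup V] [InnerProductSpace ℝ V] [FiniteDimensional ℝ V]
    [NormedAddCommGroup Z] [InnerProductSpace ℝ Z] [FiniteDimensional ℝ Z]
    (Pr Re : ℝ) (hPr : 0 < Pr) (hRe : 0 < Re)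
    (aZ : Z →ₗ[ℝ] Z →ₗ[ℝ] ℝ)
    (haZ_symm : ∀ z₁ z₂ : Z, aZ z₁ z₂ = aZ z₂ z₁)
    (haZ_coer : ∀ z : Z, (Pr * Re)⁻¹ * ‖z‖ ^ 2 ≤ aZ z z)
    (M₃ : ℝ) (hM₃ : 0 ≤ M₃)
    (c₃ : V →ₗ[ℝ] Z →ₗ[ℝ] Z →ₗ[ℝ] ℝ)
    (hc₃_bound : ∀ (u : V) (T z : Z), |c₃ u T z| ≤ M₃ * ‖u‖ * ‖T‖ * ‖z‖)
    (hc₃_skew : ∀ (u : V) (z : Z), c₃ u z z = 0)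
    (f₃ : Z →L[ℝ] ℝ) (E : Z →L[ℝ] ℝ)
    (U₁ U₂ : V) (T₁ T₂ : Z)
    (hT₁ : ∀ z : Z, aZ T₁ z + c₃ U₁ T₁ z = f₃ z + E z)
    (hT₂ : ∀ z : Z, aZ T₂ z + c₃ U₂ T₂ z = f₃ z) :
    ‖T₁ - T₂‖ ≤ Pr * Re * ‖E‖ + M₃ * (Pr * Re) ^ 2 * ‖f₃‖ * ‖U₁ - U₂‖ := by
  have hPR : (0:ℝ) < Pr * Re := mul_pos hPr hRe
  set e := T₁ - T₂ with he
  -- bound on ‖T₂‖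
  have hT2 : ‖T₂‖ ≤ Pr * Re * ‖f₃‖ := by
    have h := hT₂ T₂
    have hc := hc₃_skew U₂ T₂
    have hcoer := haZ_coer T₂
    have hf : f₃ T₂ ≤ ‖f₃‖ * ‖T₂‖ := (le_abs_self _).trans (f₃.le_opNorm T₂)
    have h1 : ‖T₂‖ ^ 2 ≤ Pr * Re * (‖f₃‖ * ‖T₂‖) := by
      rw [← inv_mul_le_iff₀ hPR]; linarith
    rcases eq_or_lt_of_le (norm_nonneg T₂) with h0 | h0
    · rw [← h0]; positivity
    · have := (mul_le_mul_iff_of_pos_right h0).mp (by nlinarith : ‖T₂‖ * ‖T₂‖ ≤ (Pr * Re * ‖f₃‖) * ‖T₂‖)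
      exact this
  -- error equation
  have key : aZ e e + c₃ (U₁ - U₂) T₂ e = E e := by
    have h1 := hT₁ e
    have h2 := hT₂ e
    have hsk := hc₃_skew U₁ e
    simp only [he, map_sub, LinearMap.sub_apply] at h1 h2 hsk ⊢
    linarith
  have hcoer := haZ_coer e
  have hE : E e ≤ ‖E‖ * ‖e‖ := (le_abs_self _).trans (E.le_opNorm e)
  have hc : -(M₃ * ‖U₁ - U₂‖ * ‖T₂‖ * ‖e‖) ≤ c₃ (U₁ - U₂) T₂ e :=
    neg_le_of_abs_le (hc₃_bound _ _ _)
  have h1 : ‖e‖ ^ 2 ≤ Pr * Re * ((‖E‖ + M₃ * ‖U₁ - U₂‖ * ‖T₂‖) * ‖e‖) := by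
    rw [← inv_mul_le_iff₀ hPR]; nlinarith
  have hfin : ‖e‖ ≤ Pr * Re * (‖E‖ + M₃ * ‖U₁ - U₂‖ * ‖T₂‖) := by
    rcases eq_or_lt_of_le (norm_nonneg e) with h0 | h0
    · rw [← h0]; positivity
    · exact (mul_le_mul_iff_of_pos_right h0).mp (by nlinarith)
  have hU : 0 ≤ ‖U₁ - U₂‖ := norm_nonneg _
  calc ‖e‖ ≤ Pr * Re * (‖E‖ + M₃ * ‖U₁ - U₂‖ * ‖T₂‖) := hfin
    _ ≤ Pr * Re * ‖E‖ + M₃ * (Pr * Re) ^ 2 * ‖f₃‖ * ‖U₁ - U₂‖ := by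
      nlinarith [mul_le_mul_of_nonneg_left hT2 (by positivity : (0:ℝ) ≤ Pr * Re * M₃ * ‖U₁ - U₂‖)]
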